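/- Let G be a group with Λ-valued length function L with c(g,h) ∈ Λ for all g,h, and let T(G) be the associated Λ-tree of pairs ⟨n,g⟩ (n ∈ [0,L(g)]) modulo ⟨n,g⟩ = ⟨n,h⟩ when n ≤ c(g,h), with metric d(⟨n,g⟩,⟨m,h⟩) = n + m − 2·min{n,m,c(g,h)}. Then the map g ↦ ⟨L(g), g⟩ is an isometric embedding of G (with metric d(g,h) = L(g^{-1}h)) into T(G). -/

import Mathlib

section TofG

variable {Λ : Type*} [AddCommGroup Λ] [LinearOrder Λ] [IsOrderedAddMonoid Λ] {G : Type*} [Group G]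

/-- A point `⟨n, g⟩` of the disjoint union of intervals `[0, L g]_Λ`. -/
def TValid (L : G → Λ) (p : Λ × G) : Prop := 0 ≤ p.1 ∧ p.1 ≤ L p.2

/-- The identification `⟨n, g⟩ ~ ⟨m, h⟩` iff `n = m` and `n ≤ c(g, h)`. -/
def TRel (c : G → G → Λ) (p q : Λ × G) : Prop :=
  p.1 = q.1 ∧ p.1 ≤ c p.2 q.2

/-- The distance `d(⟨n,g⟩, ⟨m,h⟩) = n + m - 2 min {n, m, c(g,h)}`. -/
def TDist (c : G → G → Λ) (p q : Λ × G) : Λ :=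
  p.1 + q.1 - (min p.1 (min q.1 (c p.2 q.2)) + min p.1 (min q.1 (c p.2 q.2)))

end TofG

private lemma add_self_cancel' {Λ : Type*} [AddCommGroup Λ] [LinearOrder Λ] [IsOrderedAddMonoid Λ]
    {x y : Λ} (h : x + x = y + y) : x = y := by
  rcases lt_trichotomy x y with hlt | he | hgt
  · exact absurd h (ne_of_lt (add_lt_add hlt hlt))
  · exact he
  · exact absurd h (ne_of_gt (add_lt_add hgt hgt))

/-- For a group `G` with `Λ`-valued length function `L` (with
`c(g,h) ∈ Λ` for all `g, h`) and `T(G)` the associated `Λ`-tree with metric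
`d(⟨n,g⟩, ⟨m,h⟩) = n + m - 2 min {n, m, c(g,h)}`, the map `g ↦ ⟨L g, g⟩`
is an isometric embedding of `(G, d(g,h) = L (g⁻¹ h))` into `T(G)`:
the points `⟨L g, g⟩` lie in `T(G)` and their distances equal `L (g⁻¹ h)`. -/
theorem stmt_12 {Λ : Type*} [AddCommGroup Λ] [LinearOrder Λ] [IsOrderedAddMonoid Λ]
    {G : Type*} [Group G] (L : G → Λ) (c : G → G → Λ)
    (hc : ∀ g h, c g h + c g h = L g + L h - L (g⁻¹ * h))
    (h1 : ∀ g, L g = 0 ↔ g = 1)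
    (h2 : ∀ g : G, L g⁻¹ = L g)
    (h3 : ∀ g h k : G, min (c g k) (c h k) ≤ c g h) :
    (∀ g : G, TValid L (L g, g)) ∧
    (∀ g h : G, TDist c (L g, g) (L h, h) = L (g⁻¹ * h)) ∧
    (∀ g h : G, TRel c (L g, g) (L h, h) → g = h) := by
  have hL1 : L (1 : G) = 0 := (h1 1).mpr rfl
  -- c g g = L g
  have hcgg : ∀ g : G, c g g = L g := by
    intro g
    have := hc g g
    rw [inv_mul_cancel, hL1] at this
    have : c g g + c g g = L g + L g := by rw [this]; abel
    exact add_self_cancel' this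
  -- c g 1 = 0
  have hcg1 : ∀ g : G, c g 1 = 0 := by
    intro g
    have := hc g 1
    rw [hL1, mul_one, h2] at this
    have : c g 1 + c g 1 = (0 : Λ) + 0 := by rw [this]; abel
    exact add_self_cancel' this
  -- 0 ≤ L g
  have hLpos : ∀ g : G, 0 ≤ L g := by
    intro g
    have := h3 g g 1
    rw [hcg1, hcgg, min_self] at this
    exact this
  -- c g h ≤ L g
  have hcle : ∀ g h : G, c g h ≤ L g := by
    intro g h
    have := h3 g g h
    rw [min_self, hcgg] at this
    exact this
  -- c symmetric
  have hcsymm : ∀ g h : G, c g h = c h g := by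
    intro g h
    have e1 := hc g h
    have e2 := hc h g
    have hLs : L (g⁻¹ * h) = L (h⁻¹ * g) := by
      rw [← h2 (g⁻¹ * h)]; congr 1; group
    refine add_self_cancel' ?_
    rw [e1, e2, hLs]; abel
  refine ⟨fun g => ⟨hLpos g, le_refl _⟩, ?_, ?_⟩
  · intro g h
    have hle2 : c g h ≤ L h := by rw [hcsymm]; exact hcle h g
    have hmin : min (L g) (min (L h) (c g h)) = c g h := by
      rw [min_eq_right hle2, min_eq_right (le_trans (hcle g h) (le_refl _))]
    simp only [TDist, hmin]
    have := hc g h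
    have : c g h + c g h = L g + L h - L (g⁻¹ * h) := this
    rw [this]; abel
  · intro g h ⟨heq, hle⟩
    simp only at heq hle
    have hch : c g h = L g := le_antisymm (hcle g h) hle
    have : L (g⁻¹ * h) = 0 := by
      have e := hc g h
      rw [hch, ← heq] at e
      exact sub_eq_self.mp e.symm
    exact inv_mul_eq_one.mp ((h1 _).mp this)
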